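/- arXiv:1812.02085 — 3 statements merged into one kernel-verified Lean document; each statement's English description precedes it below -/
import Mathlib

section
/- The measure μ on the unit disk 𝔻 ⊂ ℂ given by dμ(z) = dA(z)/|1-z| (where dA is planar Lebesgue measure) is a Carleson measure: there exists a constant C > 0 such that for every ε > 0 and every θ ∈ ℝ, μ(S_ε(θ)) ≤ Cε, where S_ε(θ) = {re^{iα} : 1-ε < r < 1, θ-ε < α < θ+ε}. -/
open MeasureTheory Metric Set Real
open scoped ENNReal NNReal

/-- The Carleson box `S_ε(θ) = {re^{iα} : 1-ε < r < 1, θ-ε < α < θ+ε}`. -/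
def carlesonBox (ε θ : ℝ) : Set ℂ :=
  {z : ℂ | ∃ r α : ℝ, 1 - ε < r ∧ r < 1 ∧ θ - ε < α ∧ α < θ + ε ∧
    z = (r : ℂ) * Complex.exp (α * Complex.I)}

lemma aux_exp_sub_one (t : ℝ) : ‖Complex.exp (t * Complex.I) - 1‖ ≤ |t| := by
  have h : Complex.exp (t * Complex.I) - 1 = Complex.ofReal (Real.cos t - 1) + Complex.ofReal (Real.sin t) * Complex.I := by
    rw [Complex.exp_mul_I]
    push_cast
    ring
  rw [h]
  have habs : ‖Complex.ofReal (Real.cos t - 1) + Complex.ofReal (Real.sin t) * Complex.I‖ = Real.sqrt ((Real.cos t - 1)^2 + (Real.sin t)^2) := by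
    rw [Complex.norm_def, Complex.normSq_add_mul_I]
  rw [habs]
  have key : (Real.cos t - 1)^2 + (Real.sin t)^2 ≤ t^2 := by
    have h1 : (Real.cos t - 1)^2 + (Real.sin t)^2 = 2 - 2 * Real.cos t := by
      have := Real.sin_sq_add_cos_sq t; nlinarith
    have h2 : Real.sin (t/2)^2 = (1 - Real.cos t)/2 := by
      have hc := Real.cos_sq (t/2)
      have ht : 2*(t/2) = t := by ring
      rw [ht] at hc
      nlinarith [Real.sin_sq_add_cos_sq (t/2)]
    have h3 : |Real.sin (t/2)| ≤ |t/2| := Real.abs_sin_le_abs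
    have h4 : Real.sin (t/2)^2 ≤ (t/2)^2 := by
      rw [← sq_abs, ← sq_abs (t/2)]; exact pow_le_pow_left₀ (abs_nonneg _) h3 2
    nlinarith
  calc Real.sqrt ((Real.cos t - 1)^2 + (Real.sin t)^2) ≤ Real.sqrt (t^2) := Real.sqrt_le_sqrt key
    _ = |t| := Real.sqrt_sq_eq_abs t

lemma aux_exp_dist (α θ : ℝ) :
    ‖Complex.exp (α * Complex.I) - Complex.exp (θ * Complex.I)‖ ≤ |α - θ| := by
  have h : Complex.exp (α * Complex.I) - Complex.exp (θ * Complex.I)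
      = Complex.exp (θ * Complex.I) * (Complex.exp ((α - θ : ℝ) * Complex.I) - 1) := by
    rw [mul_sub, ← Complex.exp_add, mul_one]
    push_cast
    ring_nf
  rw [h, norm_mul, Complex.norm_exp_ofReal_mul_I, one_mul]
  exact aux_exp_sub_one _

lemma pi_enn : (NNReal.pi : ℝ≥0∞) = ENNReal.ofReal π := by
  rw [← NNReal.coe_real_pi, ENNReal.ofReal_coe_nnreal]

lemma vol_cball (a : ℂ) (r : ℝ) (hr : 0 ≤ r) :
    volume (ball a r) = ENNReal.ofReal (π * r^2) := by
  rw [Complex.volume_ball, pi_enn, ← ENNReal.ofReal_pow hr,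
    ← ENNReal.ofReal_mul (by positivity), mul_comm]

lemma ball_lintegral (R : ℝ) (hR : 0 < R) :
    (∫⁻ z in ball (1:ℂ) R, ENNReal.ofReal (1 / ‖1 - z‖)) ≤
      ENNReal.ofReal (2 * π * R) := by
  have hmeas : AEMeasurable (fun z : ℂ => 1 / ‖1 - z‖)
      (volume.restrict (ball (1:ℂ) R)) :=
    (measurable_const.div
      ((continuous_norm.comp (continuous_const.sub continuous_id)).measurable)).aemeasurable
  have hnn : 0 ≤ᵐ[volume.restrict (ball (1:ℂ) R)] fun z : ℂ => 1 / ‖1 - z‖ :=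
    Filter.Eventually.of_forall (fun z => by positivity)
  rw [lintegral_eq_lintegral_meas_lt _ hnn hmeas]
  have hbound : ∀ t ∈ Ioi (0:ℝ),
      (volume.restrict (ball (1:ℂ) R)) {z : ℂ | t < 1 / ‖1 - z‖}
        ≤ min (ENNReal.ofReal (π * (1/t)^2)) (ENNReal.ofReal (π * R^2)) := by
    intro t ht
    have ht' : (0:ℝ) < t := ht
    rw [Measure.restrict_apply' measurableSet_ball]
    have hsub : {z : ℂ | t < 1 / ‖1 - z‖} ⊆ ball (1:ℂ) (1/t) := by
      intro z hz
      simp only [mem_setOf_eq] at hz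
      have h0 : 0 < ‖1 - z‖ := by
        rcases lt_or_eq_of_le (norm_nonneg (1 - z)) with h | h
        · exact h
        · rw [← h] at hz; simp at hz; exact absurd hz (not_lt.mpr ht'.le)
      have h1 : ‖1 - z‖ < 1 / t := by
        rw [lt_div_iff₀ h0] at hz
        rw [lt_div_iff₀ ht']
        nlinarith
      rw [mem_ball, Complex.dist_eq, ← norm_neg, neg_sub]
      exact h1
    refine le_min ?_ ?_
    · refine le_trans (measure_mono (inter_subset_left.trans hsub)) ?_
      rw [vol_cball _ _ (by positivity)]
    · refine le_trans (measure_mono inter_subset_right) ?_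
      rw [vol_cball _ _ hR.le]
  calc (∫⁻ t in Ioi (0:ℝ), (volume.restrict (ball (1:ℂ) R)) {z : ℂ | t < 1 / ‖1 - z‖})
      ≤ ∫⁻ t in Ioi (0:ℝ), min (ENNReal.ofReal (π * (1/t)^2)) (ENNReal.ofReal (π * R^2)) :=
        setLIntegral_mono_ae (by fun_prop) (Filter.Eventually.of_forall hbound)
    _ ≤ (∫⁻ t in Ioc (0:ℝ) (1/R), ENNReal.ofReal (π * R^2)) +
        ∫⁻ t in Ioi (1/R), ENNReal.ofReal (π * (1/t)^2) := by
        rw [← Ioc_union_Ioi_eq_Ioi (le_of_lt (by positivity : (0:ℝ) < 1/R))]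
        refine le_trans (lintegral_union_le _ _ _) (add_le_add ?_ ?_)
        · exact lintegral_mono (fun t => min_le_right _ _)
        · exact lintegral_mono (fun t => min_le_left _ _)
    _ ≤ ENNReal.ofReal (π * R) + ENNReal.ofReal (π * R) := by
        refine add_le_add ?_ ?_
        · rw [setLIntegral_const, Real.volume_Ioc,
            ← ENNReal.ofReal_mul (by positivity)]
          refine ENNReal.ofReal_le_ofReal ?_
          rw [show (1:ℝ)/R - 0 = 1/R by ring, mul_one_div, sq, mul_div_assoc,
            mul_div_assoc, div_self hR.ne']
          linarith
        · have heq : ∀ t ∈ Ioi (1/R), ENNReal.ofReal (π * (1/t)^2)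
              = ENNReal.ofReal (π * t ^ (-2:ℝ)) := by
            intro t ht
            have ht0 : 0 < t := lt_trans (by positivity) ht
            congr 1
            rw [Real.rpow_neg ht0.le, show ((2:ℝ)) = ((2:ℕ):ℝ) by norm_num,
              Real.rpow_natCast]
            field_simp
          rw [setLIntegral_congr_fun measurableSet_Ioi heq]
          have hint : IntegrableOn (fun t : ℝ => π * t ^ (-2:ℝ)) (Ioi (1/R)) :=
            (integrableOn_Ioi_rpow_of_lt (by norm_num) (by positivity)).const_mul π
          have hnn2 : ∀ t ∈ Ioi (1/R), (0:ℝ) ≤ π * t ^ (-2:ℝ) := by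
            intro t ht
            have ht0 : 0 < t := lt_trans (by positivity) ht
            positivity
          rw [← ofReal_integral_eq_lintegral_ofReal hint
            ((ae_restrict_iff' measurableSet_Ioi).mpr (Filter.Eventually.of_forall hnn2))]
          refine ENNReal.ofReal_le_ofReal ?_
          rw [MeasureTheory.integral_const_mul, integral_Ioi_rpow_of_lt (by norm_num)
            (by positivity), show (-2:ℝ) + 1 = -1 by norm_num, Real.rpow_neg_one,
            one_div, inv_inv]
          rw [show (-R / -1 : ℝ) = R by ring]
    _ = ENNReal.ofReal (2 * π * R) := by
        rw [← ENNReal.ofReal_add (by positivity) (by positivity)]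
        ring_nf


lemma box_subset (ε θ : ℝ) (hε : 0 < ε) :
    carlesonBox ε θ ⊆ ball (Complex.exp (θ * Complex.I)) (2 * ε) := by
  rintro z ⟨r, α, hr1, hr2, ha1, ha2, rfl⟩
  rw [mem_ball, Complex.dist_eq]
  have h1 : ‖(r:ℂ) * Complex.exp (α * Complex.I) - Complex.exp (α * Complex.I)‖
      = |r - 1| := by
    rw [show (r:ℂ) * Complex.exp (α * Complex.I) - Complex.exp (α * Complex.I)
        = ((r:ℝ) - 1 : ℝ) * Complex.exp (α * Complex.I) by push_cast; ring]
    rw [norm_mul, Complex.norm_exp_ofReal_mul_I, mul_one, Complex.norm_real, Real.norm_eq_abs]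
  calc ‖(r:ℂ) * Complex.exp (α * Complex.I) - Complex.exp (θ * Complex.I)‖
      ≤ ‖(r:ℂ) * Complex.exp (α * Complex.I) - Complex.exp (α * Complex.I)‖
        + ‖Complex.exp (α * Complex.I) - Complex.exp (θ * Complex.I)‖ := by
        have := norm_sub_le_norm_sub_add_norm_sub ((r:ℂ) * Complex.exp (α * Complex.I))
          (Complex.exp (α * Complex.I)) (Complex.exp (θ * Complex.I))
        exact this
    _ ≤ |r - 1| + |α - θ| := by
        rw [h1]; exact add_le_add le_rfl (aux_exp_dist α θ)
    _ < 2 * ε := by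
        have hα : |α - θ| < ε := abs_lt.mpr ⟨by linarith, by linarith⟩
        have hr : |r - 1| < ε := abs_lt.mpr ⟨by linarith, by linarith⟩
        linarith

/-- The measure `dμ(z) = dA(z)/|1-z|` on the unit disk is a Carleson measure. -/
theorem carleson_measure_one_over_one_sub_z :
    ∃ C : ℝ, 0 < C ∧ ∀ ε : ℝ, 0 < ε → ∀ θ : ℝ,
      (∫⁻ z in carlesonBox ε θ, ENNReal.ofReal (1 / ‖1 - z‖)) ≤
        ENNReal.ofReal (C * ε) := by
  refine ⟨12 * π, by positivity, fun ε hε θ => ?_⟩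
  have hsub := box_subset ε θ hε
  have step1 : (∫⁻ z in carlesonBox ε θ, ENNReal.ofReal (1 / ‖1 - z‖)) ≤
      ∫⁻ z in ball (Complex.exp (θ * Complex.I)) (2 * ε),
        ENNReal.ofReal (1 / ‖1 - z‖) :=
    lintegral_mono_set hsub
  refine step1.trans ?_
  by_cases hD : ‖1 - Complex.exp (θ * Complex.I)‖ ≤ 4 * ε
  · -- near case: ball ⊆ ball 1 (6ε)
    have hsub2 : ball (Complex.exp (θ * Complex.I)) (2 * ε) ⊆ ball (1:ℂ) (6 * ε) := by
      intro z hz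
      rw [mem_ball, Complex.dist_eq] at hz ⊢
      calc ‖z - 1‖
          ≤ ‖z - Complex.exp (θ * Complex.I)‖
            + ‖Complex.exp (θ * Complex.I) - 1‖ :=
            norm_sub_le_norm_sub_add_norm_sub _ _ _
        _ < 6 * ε := by
            rw [← norm_neg (Complex.exp (θ * Complex.I) - 1), neg_sub] at *
            linarith
    refine (lintegral_mono_set hsub2).trans ((ball_lintegral (6 * ε) (by positivity)).trans ?_)
    exact ENNReal.ofReal_le_ofReal (by nlinarith [Real.pi_pos])
  · -- far case: integrand bounded by 1/(2ε)
    push_neg at hD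
    have hbd : ∀ z ∈ ball (Complex.exp (θ * Complex.I)) (2 * ε),
        ENNReal.ofReal (1 / ‖1 - z‖) ≤ ENNReal.ofReal (1 / (2 * ε)) := by
      intro z hz
      rw [mem_ball, Complex.dist_eq] at hz
      have h1 : 2 * ε ≤ ‖1 - z‖ := by
        have htri := norm_sub_le_norm_sub_add_norm_sub (1:ℂ) z (Complex.exp (θ * Complex.I))
        linarith
      refine ENNReal.ofReal_le_ofReal ?_
      exact one_div_le_one_div_of_le (by positivity) h1
    calc (∫⁻ z in ball (Complex.exp (θ * Complex.I)) (2 * ε),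
          ENNReal.ofReal (1 / ‖1 - z‖))
        ≤ ∫⁻ _ in ball (Complex.exp (θ * Complex.I)) (2 * ε),
          ENNReal.ofReal (1 / (2 * ε)) :=
          setLIntegral_mono measurable_const hbd
      _ = ENNReal.ofReal (1 / (2 * ε)) * volume (ball (Complex.exp (θ * Complex.I)) (2 * ε)) := by
          rw [setLIntegral_const]
      _ ≤ ENNReal.ofReal (12 * π * ε) := by
          rw [vol_cball _ _ (by positivity), ← ENNReal.ofReal_mul (by positivity)]
          refine ENNReal.ofReal_le_ofReal ?_
          have heq : 1 / (2*ε) * (π * (2*ε)^2) = 2 * π * ε := by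
            field_simp
          rw [heq]
          nlinarith [Real.pi_pos]
end

section
/- For real numbers p and β with 1 < p < 2 and β > 1, the integral over the set S₁ = {1 + re^{iθ} : 0 < r ≤ 3/4, 3π/4 ≤ θ ≤ 5π/4} of the function z ↦ 1/((1-|z|)^{2-p} · |1-z|^p · (log(1/(1-|z|)))^β) with respect to planar Lebesgue measure is finite. -/
open MeasureTheory Metric Set Real

/-- The set `S₁ = {1 + re^{iθ} : 0 < r ≤ 3/4, 3π/4 ≤ θ ≤ 5π/4}`. -/
def S1 : Set ℂ :=
  {z : ℂ | ∃ r θ : ℝ, 0 < r ∧ r ≤ 3 / 4 ∧ 3 * π / 4 ≤ θ ∧ θ ≤ 5 * π / 4 ∧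
    z = 1 + (r : ℂ) * Complex.exp (θ * Complex.I)}

noncomputable section AuxS1

/-- Bertrand-type integral near `0`. -/
lemma S1aux_bertrand_int {β : ℝ} (hβ : 1 < β) :
    IntegrableOn (fun r : ℝ => 1 / (r * (Real.log (1 / r)) ^ β)) (Ioc 0 (3/4)) volume := by
  have hβ0 : (1 : ℝ) - β ≠ 0 := by linarith
  have hA : IntegrableOn
      (fun x : ℝ => (1 - β)⁻¹ * (x⁻¹ * (1 - β) * Real.log x ^ (1 - β - 1))) (Ioi (4/3 : ℝ)) := by
    apply integrableOn_Ioi_deriv_of_nonneg' (l := (1 - β)⁻¹ * 0)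
      (g := fun x => (1 - β)⁻¹ * Real.log x ^ (1 - β))
    · intro x hx
      have hx1 : (1:ℝ) < x := by
        have : (4/3 : ℝ) ≤ x := hx
        linarith
      have hlx : 0 < Real.log x := Real.log_pos hx1
      exact ((Real.hasDerivAt_log (by linarith)).rpow_const (Or.inl hlx.ne')).const_mul _
    · intro x hx
      have hx1 : (1:ℝ) < x := by
        have : (4/3 : ℝ) < x := hx
        linarith
      have hlx : 0 < Real.log x := Real.log_pos hx1
      have : (1 - β)⁻¹ * (x⁻¹ * (1 - β) * Real.log x ^ (1 - β - 1))
          = x⁻¹ * Real.log x ^ (1 - β - 1) := by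
        field_simp
      rw [this]
      positivity
    · apply Filter.Tendsto.const_mul
      have : (1 : ℝ) - β = -(β - 1) := by ring
      rw [this]
      exact (tendsto_rpow_neg_atTop (by linarith)).comp Real.tendsto_log_atTop
  have himg : (fun x : ℝ => x⁻¹) '' Ioi (4/3 : ℝ) = Ioo 0 (3/4 : ℝ) := by
    ext y
    constructor
    · rintro ⟨x, hx, rfl⟩
      have hx' : (4/3 : ℝ) < x := hx
      have hx0 : (0:ℝ) < x := by linarith
      constructor
      · positivity
      · rw [show (3/4 : ℝ) = (4/3 : ℝ)⁻¹ by norm_num]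
        exact inv_strictAnti₀ (by norm_num) hx'
    · rintro ⟨hy0, hy1⟩
      refine ⟨y⁻¹, ?_, by simp⟩
      rw [mem_Ioi, show (4/3 : ℝ) = (3/4 : ℝ)⁻¹ by norm_num]
      exact inv_strictAnti₀ hy0 hy1
  have key := integrableOn_image_iff_integrableOn_abs_deriv_smul
      (measurableSet_Ioi (a := (4/3 : ℝ)))
      (f := fun x : ℝ => x⁻¹) (f' := fun x : ℝ => -(x^2)⁻¹)
      (fun x hx => (hasDerivAt_inv (by
        have : (4/3:ℝ) < x := hx
        positivity)).hasDerivWithinAt)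
      (fun a _ b _ h => inv_injective h)
      (fun r : ℝ => 1 / (r * (Real.log (1 / r)) ^ β))
  rw [himg] at key
  rw [integrableOn_Ioc_iff_integrableOn_Ioo, key]
  apply hA.congr_fun ?_ measurableSet_Ioi
  intro x hx
  have hx' : (4/3 : ℝ) < x := hx
  have hx0 : (0:ℝ) < x := by linarith
  have hx1 : (1:ℝ) < x := by linarith
  have hlx : 0 < Real.log x := Real.log_pos hx1
  have h1 : Real.log (1 / x⁻¹) = Real.log x := by rw [one_div, inv_inv]
  have h2 : (1:ℝ) - β - 1 = -β := by ring
  simp only [smul_eq_mul]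
  rw [h1, abs_neg, abs_inv, abs_pow, abs_of_pos hx0, h2, Real.rpow_neg hlx.le]
  have hlb : Real.log x ^ β ≠ 0 := by positivity
  field_simp

/-- the parametrization of `S1` in `ℝ × ℝ` coordinates. -/
def S1psi (q : ℝ × ℝ) : ℝ × ℝ := (1, 0) + _root_.polarCoord.symm q

/-- The parameter set. -/
def S1T : Set (ℝ × ℝ) := Ioc 0 (3/4) ×ˢ Icc (3 * π / 4) (5 * π / 4)

lemma S1psi_apply (q : ℝ × ℝ) : S1psi q = (1 + q.1 * Real.cos q.2, q.1 * Real.sin q.2) := by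
  simp [S1psi, _root_.polarCoord, Prod.ext_iff]

lemma S1_esymm_psi (r θ : ℝ) :
    Complex.measurableEquivRealProd.symm (S1psi (r, θ))
      = 1 + (r : ℂ) * Complex.exp (θ * Complex.I) := by
  rw [S1psi_apply]
  apply Complex.ext <;>
    simp [Complex.exp_mul_I, Complex.cos_ofReal_re, Complex.mul_re, Complex.mul_im,
      Complex.add_re, Complex.add_im, Complex.sin_ofReal_re]

lemma S1_eq_image : S1 = Complex.measurableEquivRealProd.symm '' (S1psi '' S1T) := by
  ext z
  constructor
  · rintro ⟨r, θ, h1, h2, h3, h4, rfl⟩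
    exact ⟨S1psi (r, θ), ⟨(r, θ), ⟨⟨h1, h2⟩, h3, h4⟩, rfl⟩, S1_esymm_psi r θ⟩
  · rintro ⟨q, ⟨⟨r, θ⟩, ⟨⟨h1, h2⟩, h3, h4⟩, rfl⟩, rfl⟩
    exact ⟨r, θ, h1, h2, h3, h4, S1_esymm_psi r θ⟩

lemma S1_sqrt_two_ge : (1.41 : ℝ) ≤ Real.sqrt 2 := by
  nlinarith [Real.sq_sqrt (by norm_num : (0:ℝ) ≤ 2), Real.sqrt_nonneg 2]

lemma S1_cos_bound {θ : ℝ} (h3 : 3 * π / 4 ≤ θ) (h4 : θ ≤ 5 * π / 4) :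
    Real.cos θ ≤ -(Real.sqrt 2 / 2) := by
  have hpi : (3:ℝ) < π := by linarith [Real.pi_gt_three]
  have h1 : |θ - π| ≤ π / 4 := by
    rw [abs_le]; constructor <;> linarith
  have h2 : Real.cos (π/4) ≤ Real.cos |θ - π| :=
    Real.cos_le_cos_of_nonneg_of_le_pi (abs_nonneg _) (by linarith) h1
  rw [Real.cos_abs, Real.cos_sub_pi, Real.cos_pi_div_four] at h2
  linarith

lemma S1_injOn_psi : Set.InjOn S1psi S1T := by
  rintro ⟨r, θ⟩ ⟨⟨hr0, hr1⟩, hθ1, hθ2⟩ ⟨r', θ'⟩ ⟨⟨hr0', hr1'⟩, hθ1', hθ2'⟩ h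
  rw [S1psi_apply, S1psi_apply, Prod.ext_iff] at h
  obtain ⟨h1, h2⟩ := h
  simp only at h1 h2 hθ1 hθ2 hθ1' hθ2' hr0 hr0'
  have h1' : r * Real.cos θ = r' * Real.cos θ' := by linarith
  have hrr : r = r' := by
    have e1 := Real.sin_sq_add_cos_sq θ
    have e2 := Real.sin_sq_add_cos_sq θ'
    have hsq : r ^ 2 = r' ^ 2 := by
      linear_combination (-(r^2)) * e1 + (r'^2) * e2 +
        (r * Real.cos θ + r' * Real.cos θ') * h1' + (r * Real.sin θ + r' * Real.sin θ') * h2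
    have hle : r ≤ r' := by nlinarith
    have hge : r' ≤ r := by nlinarith
    linarith
  subst hrr
  have hc : Real.cos θ = Real.cos θ' := by
    exact mul_left_cancel₀ hr0.ne' h1'
  have hs : Real.sin θ = Real.sin θ' := by
    exact mul_left_cancel₀ hr0.ne' h2
  have hcos1 : Real.cos (θ - θ') = 1 := by
    rw [Real.cos_sub, hc, hs]
    linear_combination Real.sin_sq_add_cos_sq θ'
  have hpi : (0:ℝ) < π := Real.pi_pos
  have := (Real.cos_eq_one_iff_of_lt_of_lt (x := θ - θ') (by linarith) (by linarith)).1 hcos1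
  have : θ = θ' := by linarith
  simp [this]

/-- The derivative of the parametrization. -/
def S1B (q : ℝ × ℝ) : ℝ × ℝ →L[ℝ] ℝ × ℝ :=
  LinearMap.toContinuousLinearMap (Matrix.toLin (Module.Basis.finTwoProd ℝ) (Module.Basis.finTwoProd ℝ)
    !![Real.cos q.2, -q.1 * Real.sin q.2; Real.sin q.2, q.1 * Real.cos q.2])

lemma S1B_det (q : ℝ × ℝ) : (S1B q).det = q.1 := by
  conv_rhs => rw [← one_mul q.1, ← Real.cos_sq_add_sin_sq q.2]
  simp only [S1B, neg_mul, LinearMap.det_toContinuousLinearMap, LinearMap.det_toLin,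
    Matrix.det_fin_two_of, sub_neg_eq_add]
  ring

lemma S1_hasFDerivAt_psi (q : ℝ × ℝ) : HasFDerivAt S1psi (S1B q) q :=
  (hasFDerivAt_polarCoord_symm q).const_add (1, 0)

lemma S1_pointwise_bound (p β : ℝ) (hp1 : 1 < p) (hp2 : p < 2) (hβ : 1 < β)
    {r θ : ℝ} (hr0 : 0 < r) (hr1 : r ≤ 3/4) (hθ1 : 3 * π / 4 ≤ θ) (hθ2 : θ ≤ 5 * π / 4) :
    ‖r * (1 / ((1 - ‖1 + (r : ℂ) * Complex.exp (θ * Complex.I)‖) ^ (2 - p) *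
        ‖1 - (1 + (r : ℂ) * Complex.exp (θ * Complex.I))‖ ^ p *
        (Real.log (1 / (1 - ‖1 + (r : ℂ) * Complex.exp (θ * Complex.I)‖))) ^ β))‖
      ≤ (4 : ℝ) ^ (2 - p) * (1 / (r * (Real.log (1 / r)) ^ β)) := by
  set z : ℂ := 1 + (r : ℂ) * Complex.exp (θ * Complex.I) with hz
  set a : ℝ := ‖z‖ with ha
  have habs1z : ‖1 - z‖ = r := by
    rw [show (1:ℂ) - z = -((r:ℂ) * Complex.exp (θ * Complex.I)) by rw [hz]; ring]
    simp [Complex.norm_exp_ofReal_mul_I, abs_of_pos hr0]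
  have hre : z.re = 1 + r * Real.cos θ := by
    simp [hz, Complex.exp_mul_I, Complex.cos_ofReal_re]
  have him : z.im = r * Real.sin θ := by
    simp [hz, Complex.exp_mul_I, Complex.sin_ofReal_re]
  have ha0 : 0 ≤ a := norm_nonneg z
  have hasq : a ^ 2 = 1 + 2 * r * Real.cos θ + r ^ 2 := by
    rw [ha, Complex.sq_norm, Complex.normSq_apply, hre, him]
    linear_combination r ^ 2 * Real.sin_sq_add_cos_sq θ
  have hub : 1 - a ≤ r := by
    have h := norm_sub_norm_le (1 : ℂ) z
    rw [habs1z, norm_one] at h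
    linarith
  have hlb : r / 4 ≤ 1 - a := by
    have hcos := S1_cos_bound hθ1 hθ2
    have hs2 := S1_sqrt_two_ge
    have h2 : a ^ 2 ≤ (1 - r / 4) ^ 2 := by
      nlinarith [hasq, mul_le_mul_of_nonneg_left hcos (by linarith : (0:ℝ) ≤ 2 * r),
        mul_le_mul_of_nonneg_right hs2 hr0.le, mul_le_mul_of_nonneg_left hr1 hr0.le]
    nlinarith [h2, ha0, hr1]
  have h1a : 0 < 1 - a := by linarith
  have hloga : 0 < Real.log (1 / r) := by
    apply Real.log_pos
    rw [lt_div_iff₀ hr0]; linarith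
  have hlogle : Real.log (1 / r) ≤ Real.log (1 / (1 - a)) :=
    Real.log_le_log (by positivity) (one_div_le_one_div_of_le h1a hub)
  set L : ℝ := Real.log (1 / r) with hL
  set A : ℝ := (4 : ℝ) ^ (2 - p) with hA
  have hApos : 0 < A := by positivity
  set D0 : ℝ := (r / 4) ^ (2 - p) * r ^ p * L ^ β with hD0
  have hD0pos : 0 < D0 := by positivity
  have hDge : D0 ≤ (1 - a) ^ (2 - p) * ‖1 - z‖ ^ p * (Real.log (1 / (1 - a))) ^ β := by
    rw [habs1z]
    have e1 : (r / 4 : ℝ) ^ (2 - p) ≤ (1 - a) ^ (2 - p) :=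
      Real.rpow_le_rpow (by positivity) hlb (by linarith)
    have e2 : L ^ β ≤ (Real.log (1 / (1 - a))) ^ β :=
      Real.rpow_le_rpow hloga.le hlogle (by linarith)
    have hrp : (0:ℝ) < r ^ p := by positivity
    have hnn : (0:ℝ) ≤ (1 - a) ^ (2 - p) := Real.rpow_nonneg (by linarith) _
    exact mul_le_mul (mul_le_mul e1 le_rfl hrp.le hnn) e2 (by positivity)
      (mul_nonneg hnn hrp.le)
  have hfle : 1 / ((1 - a) ^ (2 - p) * ‖1 - z‖ ^ p * (Real.log (1 / (1 - a))) ^ β)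
      ≤ 1 / D0 := one_div_le_one_div_of_le hD0pos hDge
  have hDpos : 0 < (1 - a) ^ (2 - p) * ‖1 - z‖ ^ p *
      (Real.log (1 / (1 - a))) ^ β := lt_of_lt_of_le hD0pos hDge
  have hfnn : (0:ℝ) ≤ 1 / ((1 - a) ^ (2 - p) * ‖1 - z‖ ^ p *
      (Real.log (1 / (1 - a))) ^ β) := by positivity
  have hkey : r * (1 / D0) = A * (1 / (r * L ^ β)) := by
    rw [hD0, Real.div_rpow hr0.le (by norm_num : (0:ℝ) ≤ 4), ← hA]
    have hrr : r ^ ((2:ℝ) - p) * r ^ p = r ^ (2:ℕ) := by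
      rw [← Real.rpow_add hr0, ← Real.rpow_natCast r 2]; norm_num
    have hL0 : L ^ β ≠ 0 := by positivity
    have hr2 : r ^ ((2:ℝ) - p) ≠ 0 := by positivity
    have hrp0 : r ^ p ≠ 0 := by positivity
    field_simp
    linear_combination (-1 : ℝ) * hrr
  rw [norm_mul, Real.norm_eq_abs, Real.norm_eq_abs, abs_of_pos hr0, abs_of_nonneg hfnn]
  calc r * (1 / ((1 - a) ^ (2 - p) * ‖1 - z‖ ^ p *
        (Real.log (1 / (1 - a))) ^ β)) ≤ r * (1 / D0) :=
        mul_le_mul_of_nonneg_left hfle hr0.le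
    _ = A * (1 / (r * L ^ β)) := hkey

end AuxS1

theorem integrable_on_S1 (p β : ℝ) (hp1 : 1 < p) (hp2 : p < 2) (hβ : 1 < β) :
    IntegrableOn (fun z : ℂ =>
      1 / ((1 - ‖z‖) ^ (2 - p) * ‖1 - z‖ ^ p *
        (Real.log (1 / (1 - ‖z‖))) ^ β)) S1 volume := by
  set f : ℂ → ℝ := fun z =>
      1 / ((1 - ‖z‖) ^ (2 - p) * ‖1 - z‖ ^ p *
        (Real.log (1 / (1 - ‖z‖))) ^ β) with hf
  have hTmeas : MeasurableSet S1T := measurableSet_Ioc.prod measurableSet_Icc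
  rw [S1_eq_image,
    (Complex.volume_preserving_equiv_real_prod.symm _).integrableOn_image
      (MeasurableEquiv.measurableEmbedding _),
    integrableOn_image_iff_integrableOn_abs_det_fderiv_smul volume hTmeas
      (fun q _ => (S1_hasFDerivAt_psi q).hasFDerivWithinAt) S1_injOn_psi]
  -- measurability of the nice version
  have hfm : Measurable f := by
    have h : Measurable fun z : ℂ => ‖z‖ := continuous_norm.measurable
    have h2 : Measurable fun z : ℂ => ‖1 - z‖ :=
      h.comp (measurable_const.sub measurable_id)
    have h3 : Measurable Real.log := Real.measurable_log
    rw [hf]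
    fun_prop
  have hψc : Continuous S1psi := by
    rw [show S1psi = fun q : ℝ × ℝ => ((1 + q.1 * Real.cos q.2, q.1 * Real.sin q.2) : ℝ × ℝ) from
      funext S1psi_apply]
    fun_prop
  have hNm : Measurable fun q : ℝ × ℝ => q.1 * f (Complex.measurableEquivRealProd.symm (S1psi q)) :=
    measurable_fst.mul
      (hfm.comp (Complex.measurableEquivRealProd.symm.measurable.comp hψc.measurable))
  -- the dominating function
  have h1 : Integrable (fun r : ℝ => (4:ℝ) ^ (2 - p) * (1 / (r * (Real.log (1 / r)) ^ β)))
      (volume.restrict (Ioc 0 (3/4))) := (S1aux_bertrand_int hβ).const_mul _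
  haveI : IsFiniteMeasure (volume.restrict (Icc (3 * π / 4) (5 * π / 4))) :=
    ⟨by rw [Measure.restrict_apply_univ]; exact measure_Icc_lt_top⟩
  have h2 : Integrable (fun _ : ℝ => (1:ℝ))
      (volume.restrict (Icc (3 * π / 4) (5 * π / 4))) := integrable_const 1
  have h3 := h1.mul_prod h2
  rw [Measure.prod_restrict, ← Measure.volume_eq_prod ℝ ℝ] at h3
  simp only [mul_one] at h3
  have hNice : IntegrableOn
      (fun q : ℝ × ℝ => q.1 * f (Complex.measurableEquivRealProd.symm (S1psi q))) S1T := by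
    apply Integrable.mono' h3 hNm.aestronglyMeasurable
    filter_upwards [ae_restrict_mem hTmeas] with q hq
    obtain ⟨⟨hr0, hr1⟩, hθ1, hθ2⟩ := hq
    have : Complex.measurableEquivRealProd.symm (S1psi q)
        = 1 + (q.1 : ℂ) * Complex.exp (q.2 * Complex.I) := S1_esymm_psi q.1 q.2
    rw [this, hf]
    exact S1_pointwise_bound p β hp1 hp2 hβ hr0 hr1 hθ1 hθ2
  refine hNice.congr_fun (fun q hq => ?_) hTmeas
  rw [S1B_det q, abs_of_pos hq.1.1, smul_eq_mul]
  rfl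
end

section
/- Let p ∈ (1,2), s ∈ (0,1) with p - 1 < s, and set β = (2-p)/(1-s), so β > 1. Then the integral over the region S₂ = {(x,y) ∈ 𝔻 : -1/√2 ≤ y ≤ 1/√2, x ≤ 1, x ≥ 1 - |y|} of the function z ↦ 1/((1-|z|)^{2-p} |1-z|^p (log(1/(1-|z|)))^β) with respect to planar Lebesgue measure is finite. -/
open MeasureTheory Metric Set Real

/-- The set `S₂ = {(x,y) ∈ 𝔻 : -1/√2 ≤ y ≤ 1/√2, x ≤ 1, x ≥ 1 - |y|}`. -/
def S2 : Set ℂ :=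
  {z : ℂ | ‖z‖ < 1 ∧ -(1 / Real.sqrt 2) ≤ z.im ∧ z.im ≤ 1 / Real.sqrt 2 ∧
    z.re ≤ 1 ∧ 1 - |z.im| ≤ z.re}

namespace S2Aux

lemma b_pos : (0:ℝ) < 1 / Real.sqrt 2 := by positivity

lemma b_lt_one : 1 / Real.sqrt 2 < 1 := by
  rw [div_lt_one (by positivity)]
  nlinarith [Real.sq_sqrt (by norm_num : (0:ℝ) ≤ 2), Real.sqrt_nonneg 2]

/-- integrability of `y⁻¹ (log(1/y))^{-β}` near `0⁺`. -/
lemma log_int {β : ℝ} (hβ : 1 < β) {b : ℝ} (hb0 : 0 < b) (hb1 : b < 1) :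
    IntegrableOn (fun y : ℝ => y⁻¹ * (-Real.log y) ^ (-β)) (Set.Ioc 0 b) := by
  have key := intervalIntegral.integrableOn_deriv_of_nonneg
    (g := fun y : ℝ => (β - 1)⁻¹ * (-Real.log y) ^ (1 - β))
    (g' := fun y : ℝ => y⁻¹ * (-Real.log y) ^ (-β)) (a := 0) (b := b) ?_ ?_ ?_
  · exact key
  · -- continuity on Icc 0 b
    intro y hy
    rcases eq_or_lt_of_le hy.1 with h0 | h0
    · -- y = 0
      subst h0
      rw [← continuousWithinAt_diff_self]
      have hsub : Set.Icc (0:ℝ) b \ {0} ⊆ Set.Ioi 0 := by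
        intro t ht
        exact lt_of_le_of_ne ht.1.1 (Ne.symm ht.2)
      have hval : (β - 1)⁻¹ * (-Real.log 0) ^ (1 - β) = 0 := by
        rw [Real.log_zero, neg_zero, Real.zero_rpow (by intro h; apply absurd hβ; linarith)]
        ring
      have h1 : Filter.Tendsto (fun y : ℝ => -Real.log y) (nhdsWithin 0 (Set.Ioi 0))
          Filter.atTop := Filter.tendsto_neg_atBot_atTop.comp Real.tendsto_log_nhdsGT_zero
      have h2 : Filter.Tendsto (fun t : ℝ => (β - 1)⁻¹ * t ^ (1 - β)) Filter.atTop (nhds 0) := by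
        have := (tendsto_rpow_neg_atTop (by linarith : (0:ℝ) < β - 1)).const_mul ((β - 1)⁻¹)
        rw [mul_zero] at this
        convert this using 3 with t
        ring_nf
      have h3 := (h2.comp h1).mono_left (nhdsWithin_mono _ hsub)
      unfold ContinuousWithinAt
      simp only
      rw [hval]
      exact h3
    · -- y > 0
      have hy1 : y < 1 := lt_of_le_of_lt hy.2 hb1
      have hlogpos : 0 < -Real.log y := by
        have := Real.log_neg h0 hy1; linarith
      apply ContinuousAt.continuousWithinAt
      exact (((Real.continuousAt_log (ne_of_gt h0)).neg).rpow_const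
        (Or.inl (ne_of_gt hlogpos))).const_mul _
  · -- derivative
    intro y hy
    have hy0 : 0 < y := hy.1
    have hy1 : y < 1 := lt_trans hy.2 hb1
    have hlogpos : 0 < -Real.log y := by
      have := Real.log_neg hy0 hy1; linarith
    have h1 : HasDerivAt (fun t : ℝ => -Real.log t) (-y⁻¹) y :=
      (Real.hasDerivAt_log (ne_of_gt hy0)).neg
    have h3 := (h1.rpow_const (p := 1 - β) (Or.inl (ne_of_gt hlogpos))).const_mul ((β - 1)⁻¹)
    refine h3.congr_deriv ?_
    have he : (1:ℝ) - β - 1 = -β := by ring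
    rw [he]
    have hβ1 : (β:ℝ) - 1 ≠ 0 := by intro h; apply absurd hβ; intro _; linarith
    field_simp
    ring
  · intro y hy
    have hy1 : y < 1 := lt_trans hy.2 hb1
    have hlogpos : 0 < -Real.log y := by
      have := Real.log_neg hy.1 hy1; linarith
    exact mul_nonneg (inv_nonneg.mpr hy.1.le) (Real.rpow_nonneg hlogpos.le _)

lemma G0_int {β : ℝ} (hβ : 1 < β) :
    IntegrableOn (fun y : ℝ => |y|⁻¹ * (Real.log (1 / |y|)) ^ (-β))
      (Set.Icc (-(1 / Real.sqrt 2)) (1 / Real.sqrt 2)) := by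
  set b := 1 / Real.sqrt 2 with hbdef
  set G0 : ℝ → ℝ := fun y => |y|⁻¹ * (Real.log (1 / |y|)) ^ (-β) with hG0
  have hb0 : 0 < b := b_pos
  have hb1 : b < 1 := b_lt_one
  have hIoc : IntegrableOn G0 (Set.Ioc 0 b) := by
    apply (log_int hβ hb0 hb1).congr_fun _ measurableSet_Ioc
    intro y hy
    simp only [hG0, abs_of_pos hy.1, one_div, Real.log_inv]
  have hIco : IntegrableOn G0 (Set.Ico (-b) 0) := by
    have hmp : MeasurePreserving (fun y : ℝ => -y) volume volume :=
      Measure.measurePreserving_neg _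
    have hemb : MeasurableEmbedding (fun y : ℝ => -y) :=
      (Homeomorph.neg ℝ).measurableEmbedding
    have hpre : (fun y : ℝ => -y) ⁻¹' (Set.Ico (-b) 0) = Set.Ioc 0 b := by
      ext t
      simp only [Set.mem_preimage, Set.mem_Ico, Set.mem_Ioc]
      constructor
      · rintro ⟨h1, h2⟩; constructor <;> linarith
      · rintro ⟨h1, h2⟩; constructor <;> linarith
    have hiff := hmp.integrableOn_comp_preimage hemb (f := G0) (s := Set.Ico (-b) 0)
    rw [hpre] at hiff
    apply hiff.mp
    apply hIoc.congr_fun _ measurableSet_Ioc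
    intro y _
    simp only [hG0, Function.comp_apply, abs_neg]
  have hsplit : Set.Icc (-b) b ⊆ (Set.Ico (-b) 0 ∪ Set.Ioc 0 b) ∪ {0} := by
    intro t ht
    rcases lt_trichotomy t 0 with h | h | h
    · exact Or.inl (Or.inl ⟨ht.1, h⟩)
    · exact Or.inr (by simp [h])
    · exact Or.inl (Or.inr ⟨h, ht.2⟩)
  apply IntegrableOn.mono_set _ hsplit
  apply IntegrableOn.union _ _
  · exact hIco.union hIoc
  · exact (integrableOn_singleton_iff).mpr (Or.inr (by simp))

lemma inner_int {p : ℝ} (hp1 : 1 < p) (l a : ℝ) :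
    IntegrableOn (fun x : ℝ => (a - x) ^ (p - 2)) (Set.Icc l a) := by
  rcases le_or_gt l a with h | h
  · rw [integrableOn_Icc_iff_integrableOn_Ioc]
    have h1 : IntervalIntegrable (fun u : ℝ => u ^ (p - 2)) volume (a - l) (a - a) :=
      intervalIntegral.intervalIntegrable_rpow' (by linarith)
    have h2 := h1.comp_sub_left a
    rw [sub_sub_cancel, sub_sub_cancel] at h2
    exact h2.1
  · rw [Set.Icc_eq_empty (not_le.mpr h)]
    exact integrableOn_empty

lemma inner_val {p : ℝ} (hp1 : 1 < p) {l a : ℝ} (h : l ≤ a) :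
    ∫ x in Set.Icc l a, (a - x) ^ (p - 2) = (a - l) ^ (p - 1) / (p - 1) := by
  rw [MeasureTheory.integral_Icc_eq_integral_Ioc, ← intervalIntegral.integral_of_le h,
    intervalIntegral.integral_comp_sub_left (fun u : ℝ => u ^ (p - 2)) a,
    sub_self,
    integral_rpow (Or.inl (by linarith : (-1:ℝ) < p - 2)),
    Real.zero_rpow (by intro hc; apply absurd hp1; intro _; linarith : p - 2 + 1 ≠ 0)]
  rw [show p - 2 + 1 = p - 1 by ring]
  ring

/-- the comparison region in `ℝ × ℝ`. -/
def Tset : Set (ℝ × ℝ) :=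
  {q | |q.2| ≤ 1 / Real.sqrt 2 ∧ q.2 ≠ 0 ∧ 1 - |q.2| ≤ q.1 ∧ q.1 ≤ Real.sqrt (1 - q.2 ^ 2)}

/-- the comparison function. -/
noncomputable def Hb (p β : ℝ) (q : ℝ × ℝ) : ℝ :=
  ((1 - 1 / Real.sqrt 2) / 2) ^ (p - 2) * (Real.sqrt (1 - q.2 ^ 2) - q.1) ^ (p - 2) *
    |q.2| ^ (-p) * (Real.log (1 / |q.2|)) ^ (-β)

lemma measT : MeasurableSet Tset := by
  have h1 : MeasurableSet {q : ℝ × ℝ | |q.2| ≤ 1 / Real.sqrt 2} :=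
    measurableSet_le (measurable_snd.abs) measurable_const
  have h2 : MeasurableSet {q : ℝ × ℝ | q.2 ≠ 0} :=
    (measurableSet_eq_fun measurable_snd measurable_const).compl
  have h3 : MeasurableSet {q : ℝ × ℝ | 1 - |q.2| ≤ q.1} :=
    measurableSet_le (measurable_const.sub measurable_snd.abs) measurable_fst
  have h4 : MeasurableSet {q : ℝ × ℝ | q.1 ≤ Real.sqrt (1 - q.2 ^ 2)} :=
    measurableSet_le measurable_fst
      (Real.continuous_sqrt.measurable.comp (measurable_const.sub (measurable_snd.pow_const 2)))
  have : Tset = {q : ℝ × ℝ | |q.2| ≤ 1 / Real.sqrt 2} ∩ ({q : ℝ × ℝ | q.2 ≠ 0} ∩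
      ({q : ℝ × ℝ | 1 - |q.2| ≤ q.1} ∩ {q : ℝ × ℝ | q.1 ≤ Real.sqrt (1 - q.2 ^ 2)})) := by
    ext q; simp only [Tset, Set.mem_setOf_eq, Set.mem_inter_iff]
  rw [this]
  exact h1.inter (h2.inter (h3.inter h4))

lemma meas_rpow_const (c : ℝ) : Measurable fun x : ℝ => x ^ c := by
  apply measurable_of_continuousOn_compl_singleton (0 : ℝ)
  intro x hx
  exact (Real.continuousAt_rpow_const x c (Or.inl hx)).continuousWithinAt

lemma _root_.Measurable.rpow_const' {α : Type*} [MeasurableSpace α] {f : α → ℝ} (hf : Measurable f)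
    (c : ℝ) : Measurable fun x => f x ^ c :=
  (meas_rpow_const c).comp hf

lemma measH (p β : ℝ) : Measurable (Hb p β) := by
  unfold Hb
  apply Measurable.mul
  apply Measurable.mul
  apply Measurable.mul
  · exact measurable_const
  · exact ((Real.continuous_sqrt.measurable.comp
      (measurable_const.sub (measurable_snd.pow_const 2))).sub measurable_fst).rpow_const' _
  · exact (measurable_snd.abs).rpow_const' _
  · exact (Real.measurable_log.comp (measurable_const.div measurable_snd.abs)).rpow_const' _

lemma sqrt_lower {y : ℝ} (h : |y| ≤ 1) : 1 - |y| ≤ Real.sqrt (1 - y ^ 2) := by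
  rcases le_or_gt (1 - |y|) 0 with h0 | h0
  · exact le_trans h0 (Real.sqrt_nonneg _)
  · rw [show (1:ℝ) - y ^ 2 = 1 - |y| ^ 2 by rw [sq_abs]]
    rw [Real.le_sqrt h0.le]
    · nlinarith [abs_nonneg y]
    · nlinarith [abs_nonneg y]

lemma Hb_nonneg {p β : ℝ} (q : ℝ × ℝ) (hq : q ∈ Tset) : 0 ≤ Hb p β q := by
  obtain ⟨h1, h2, h3, h4⟩ := hq
  have hc : (0:ℝ) ≤ (1 - 1 / Real.sqrt 2) / 2 := by
    have := b_lt_one; linarith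
  have hlog : 0 ≤ Real.log (1 / |q.2|) := by
    apply Real.log_nonneg
    rw [le_div_iff₀ (abs_pos.mpr h2)]
    have := b_lt_one; linarith
  exact mul_nonneg (mul_nonneg (mul_nonneg (Real.rpow_nonneg hc _)
    (Real.rpow_nonneg (by linarith : (0:ℝ) ≤ Real.sqrt (1 - q.2 ^ 2) - q.1) _))
    (Real.rpow_nonneg (abs_nonneg _) _)) (Real.rpow_nonneg hlog _)

lemma indicator_int {p β : ℝ} (hp1 : 1 < p) (hp2 : p < 2) (hβ : 1 < β) :
    Integrable (Tset.indicator (Hb p β)) (volume : Measure (ℝ × ℝ)) := by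
  rw [MeasureTheory.Measure.volume_eq_prod]
  have hsm : AEStronglyMeasurable (Tset.indicator (Hb p β)) ((volume : Measure ℝ).prod volume) :=
    ((measH p β).indicator measT).aestronglyMeasurable
  rw [integrable_prod_iff' hsm]
  set C : ℝ := ((1 - 1 / Real.sqrt 2) / 2) ^ (p - 2) with hCdef
  have hsection : ∀ y : ℝ, (fun x => Tset.indicator (Hb p β) (x, y)) =
      (Set.Icc (1 - |y|) (Real.sqrt (1 - y ^ 2))).indicator
        (fun x => if |y| ≤ 1 / Real.sqrt 2 ∧ y ≠ 0 then Hb p β (x, y) else 0) := by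
    intro y
    funext x
    by_cases hy : |y| ≤ 1 / Real.sqrt 2 ∧ y ≠ 0
    · by_cases hx : x ∈ Set.Icc (1 - |y|) (Real.sqrt (1 - y ^ 2))
      · rw [Set.indicator_of_mem hx, if_pos hy,
          Set.indicator_of_mem (show (x, y) ∈ Tset from ⟨hy.1, hy.2, hx.1, hx.2⟩)]
      · rw [Set.indicator_of_notMem hx, Set.indicator_of_notMem]
        intro hmem
        exact hx ⟨hmem.2.2.1, hmem.2.2.2⟩
    · have hnot : (x, y) ∉ Tset := by
        intro hmem
        exact hy ⟨hmem.1, hmem.2.1⟩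
      rw [Set.indicator_of_notMem hnot]
      by_cases hx : x ∈ Set.Icc (1 - |y|) (Real.sqrt (1 - y ^ 2))
      · rw [Set.indicator_of_mem hx, if_neg hy]
      · rw [Set.indicator_of_notMem hx]
  constructor
  · -- sections in x are integrable
    refine Filter.Eventually.of_forall fun y => ?_
    rw [hsection y]
    rw [integrable_indicator_iff measurableSet_Icc]
    by_cases hy : |y| ≤ 1 / Real.sqrt 2 ∧ y ≠ 0
    · simp only [if_pos hy]
      have : (fun x => Hb p β (x, y)) = fun x =>
          (C * (|y| ^ (-p) * (Real.log (1 / |y|)) ^ (-β))) *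
            (Real.sqrt (1 - y ^ 2) - x) ^ (p - 2) := by
        funext x
        simp only [Hb, hCdef]
        ring
      rw [this]
      exact ((inner_int hp1 _ _).const_mul _)
    · simp only [if_neg hy]
      exact (integrableOn_const_iff).mpr (Or.inl (by simp))
  · -- integral over x, as function of y, is integrable
    have hb1 := b_lt_one
    have hb0 := b_pos
    have hC0 : 0 ≤ C := Real.rpow_nonneg (by linarith) _
    apply Integrable.mono'
      (g := fun y => (Set.Icc (-(1 / Real.sqrt 2)) (1 / Real.sqrt 2)).indicator
        (fun y => (C / (p - 1)) * (|y|⁻¹ * (Real.log (1 / |y|)) ^ (-β))) y)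
    · rw [integrable_indicator_iff measurableSet_Icc]
      exact (G0_int hβ).const_mul _
    · exact (((measH p β).indicator measT).norm.stronglyMeasurable.integral_prod_left').aestronglyMeasurable
    · refine Filter.Eventually.of_forall fun y => ?_
      rw [Real.norm_eq_abs, abs_of_nonneg (integral_nonneg fun x => norm_nonneg _)]
      by_cases hy : |y| ≤ 1 / Real.sqrt 2 ∧ y ≠ 0
      · -- main case
        have hy1 : |y| ≤ 1 := by linarith [hy.1]
        have hy0 : 0 < |y| := abs_pos.mpr hy.2
        have hla : 1 - |y| ≤ Real.sqrt (1 - y ^ 2) := sqrt_lower hy1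
        have hnn : ∀ x : ℝ, 0 ≤ Tset.indicator (Hb p β) (x, y) := by
          intro x
          by_cases hmem : (x, y) ∈ Tset
          · rw [Set.indicator_of_mem hmem]; exact Hb_nonneg _ hmem
          · rw [Set.indicator_of_notMem hmem]
        have hnorm : (fun x => ‖Tset.indicator (Hb p β) (x, y)‖) =
            fun x => Tset.indicator (Hb p β) (x, y) := by
          funext x; rw [Real.norm_eq_abs, abs_of_nonneg (hnn x)]
        rw [hnorm]
        have hKnn : 0 ≤ C * (|y| ^ (-p) * (Real.log (1 / |y|)) ^ (-β)) := by
          apply mul_nonneg hC0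
          apply mul_nonneg (Real.rpow_nonneg (abs_nonneg _) _)
          apply Real.rpow_nonneg
          apply Real.log_nonneg
          rw [le_div_iff₀ hy0]; linarith [hy.1]
        calc ∫ x, Tset.indicator (Hb p β) (x, y)
            = ∫ x in Set.Icc (1 - |y|) (Real.sqrt (1 - y ^ 2)),
              (C * (|y| ^ (-p) * (Real.log (1 / |y|)) ^ (-β))) *
                (Real.sqrt (1 - y ^ 2) - x) ^ (p - 2) := by
              rw [hsection y, MeasureTheory.integral_indicator measurableSet_Icc]
              apply MeasureTheory.setIntegral_congr_fun measurableSet_Icc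
              intro x _
              simp only [if_pos hy, Hb, hCdef]
              ring
          _ = (C * (|y| ^ (-p) * (Real.log (1 / |y|)) ^ (-β))) *
              ((Real.sqrt (1 - y ^ 2) - (1 - |y|)) ^ (p - 1) / (p - 1)) := by
              rw [MeasureTheory.integral_const_mul, inner_val hp1 hla]
          _ ≤ (C * (|y| ^ (-p) * (Real.log (1 / |y|)) ^ (-β))) * (|y| ^ (p - 1) / (p - 1)) := by
              apply mul_le_mul_of_nonneg_left _ hKnn
              apply div_le_div_of_nonneg_right ?_ (by linarith)
              apply Real.rpow_le_rpow (by linarith) ?_ (by linarith)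
              have : Real.sqrt (1 - y ^ 2) ≤ 1 := by
                have h9 := Real.sqrt_le_sqrt (show 1 - y ^ 2 ≤ 1 by nlinarith [sq_nonneg y])
                rwa [Real.sqrt_one] at h9
              linarith
          _ = (Set.Icc (-(1 / Real.sqrt 2)) (1 / Real.sqrt 2)).indicator
              (fun y => (C / (p - 1)) * (|y|⁻¹ * (Real.log (1 / |y|)) ^ (-β))) y := by
              rw [Set.indicator_of_mem (Set.mem_Icc.mpr (abs_le.mp hy.1))]
              have h1 : |y| ^ (-p) * |y| ^ (p - 1) = |y|⁻¹ := by
                rw [← Real.rpow_add hy0, show -p + (p - 1) = (-1:ℝ) by ring,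
                  Real.rpow_neg_one]
              rw [← h1]
              have hp1' : p - 1 ≠ 0 := ne_of_gt (by linarith)
              field_simp
      · -- degenerate case: section is empty
        have hzero : ∀ x : ℝ, Tset.indicator (Hb p β) (x, y) = 0 := by
          intro x
          apply Set.indicator_of_notMem
          intro hmem
          exact hy ⟨hmem.1, hmem.2.1⟩
        have : (fun x => ‖Tset.indicator (Hb p β) (x, y)‖) = fun _ => (0:ℝ) := by
          funext x; rw [hzero x, norm_zero]
        rw [this, integral_zero]
        rcases eq_or_ne y 0 with h | h
        · apply Set.indicator_apply_nonneg
          intro hmem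
          simp [h]
        · apply Set.indicator_apply_nonneg
          intro hmem
          apply mul_nonneg (div_nonneg hC0 (by linarith))
          apply mul_nonneg (inv_nonneg.mpr (abs_nonneg _))
          apply Real.rpow_nonneg
          apply Real.log_nonneg
          rw [le_div_iff₀ (abs_pos.mpr h)]
          have : |y| ≤ 1 / Real.sqrt 2 := abs_le.mpr hmem
          linarith [b_lt_one]

end S2Aux

set_option maxHeartbeats 1000000 in
open S2Aux in
theorem integrable_on_S2 (p s : ℝ) (hp1 : 1 < p) (hp2 : p < 2)
    (hs0 : 0 < s) (hs1 : s < 1) (hps : p - 1 < s)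
    (β : ℝ) (hβ : β = (2 - p) / (1 - s)) :
    IntegrableOn (fun z : ℂ =>
      1 / ((1 - ‖z‖) ^ (2 - p) * ‖1 - z‖ ^ p *
        (Real.log (1 / (1 - ‖z‖))) ^ β)) S2 volume := by
  have hβ1 : 1 < β := by
    rw [hβ]
    rw [one_lt_div (by linarith)]
    linarith
  have hβ0 : 0 ≤ β := by linarith
  have hb1 := b_lt_one
  have hb0 := b_pos
  -- the dominating function on ℂ
  set g : ℂ → ℝ := fun z => Tset.indicator (Hb p β) (z.re, z.im) with hgdef
  have hgint : Integrable g volume := by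
    have h0 : Integrable (Tset.indicator (Hb p β)) volume := indicator_int hp1 hp2 hβ1
    exact (Complex.volume_preserving_equiv_real_prod.integrable_comp_emb
      Complex.measurableEquivRealProd.measurableEmbedding).mpr h0
  have hS2meas : MeasurableSet S2 := by
    have h1 : MeasurableSet {z : ℂ | ‖z‖ < 1} :=
      measurableSet_lt continuous_norm.measurable measurable_const
    have h2 : MeasurableSet {z : ℂ | -(1 / Real.sqrt 2) ≤ z.im} :=
      measurableSet_le measurable_const Complex.measurable_im
    have h3 : MeasurableSet {z : ℂ | z.im ≤ 1 / Real.sqrt 2} :=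
      measurableSet_le Complex.measurable_im measurable_const
    have h4 : MeasurableSet {z : ℂ | z.re ≤ 1} :=
      measurableSet_le Complex.measurable_re measurable_const
    have h5 : MeasurableSet {z : ℂ | 1 - |z.im| ≤ z.re} :=
      measurableSet_le (measurable_const.sub Complex.measurable_im.abs) Complex.measurable_re
    have : S2 = {z : ℂ | ‖z‖ < 1} ∩ ({z : ℂ | -(1 / Real.sqrt 2) ≤ z.im} ∩
        ({z : ℂ | z.im ≤ 1 / Real.sqrt 2} ∩ ({z : ℂ | z.re ≤ 1} ∩
          {z : ℂ | 1 - |z.im| ≤ z.re}))) := by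
      ext z
      simp only [S2, Set.mem_setOf_eq, Set.mem_inter_iff]
    rw [this]
    exact h1.inter (h2.inter (h3.inter (h4.inter h5)))
  apply Integrable.mono' hgint.integrableOn
  · -- measurability
    apply Measurable.aestronglyMeasurable
    apply Measurable.div measurable_const
    apply Measurable.mul
    apply Measurable.mul
    · exact (measurable_const.sub continuous_norm.measurable).rpow_const' _
    · exact (continuous_norm.measurable.comp
        (measurable_const.sub measurable_id)).rpow_const' _
    · exact (Real.measurable_log.comp
        (measurable_const.div (measurable_const.sub continuous_norm.measurable))).rpow_const' _
  · -- a.e. bound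
    rw [ae_restrict_iff' hS2meas]
    refine Filter.Eventually.of_forall fun z hz => ?_
    obtain ⟨h1, h2a, h2b, h3, h4⟩ := hz
    set x := z.re with hxdef
    set y := z.im with hydef
    set r := ‖z‖ with hrdef
    set a := Real.sqrt (1 - y ^ 2) with hadef
    have hy : |y| ≤ 1 / Real.sqrt 2 := abs_le.mpr ⟨h2a, h2b⟩
    have hxr : x ≤ r := (le_abs_self _).trans (Complex.abs_re_le_norm z)
    have hr0 : 0 ≤ r := norm_nonneg z
    have hxpos : 0 < x := by
      have : 1 - |y| ≤ x := h4
      have := abs_nonneg y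
      linarith
    have hy0 : y ≠ 0 := by
      intro h
      rw [h] at h4
      simp only [abs_zero, sub_zero] at h4
      linarith
    have hay : 0 < |y| := abs_pos.mpr hy0
    have h1r : 0 < 1 - r := by linarith
    have h1rley : 1 - r ≤ |y| := by linarith
    have hsq : x ^ 2 + y ^ 2 = r ^ 2 := by
      rw [hrdef, Complex.sq_norm, Complex.normSq_apply]
      ring
    have ha0 : 0 ≤ a := Real.sqrt_nonneg _
    have hasq : a ^ 2 = 1 - y ^ 2 := Real.sq_sqrt (by nlinarith [sq_abs y, hay])
    have hxa : x < a := by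
      have hx2 : x ^ 2 < 1 - y ^ 2 := by nlinarith
      nlinarith
    have hmemT : (x, y) ∈ Tset := ⟨hy, hy0, h4, hxa.le⟩
    rw [hgdef]
    simp only
    rw [Set.indicator_of_mem hmemT]
    set c : ℝ := (1 - 1 / Real.sqrt 2) / 2 with hcdef
    have hc : 0 < c := by rw [hcdef]; linarith
    -- key geometric inequality
    have key1 : c * (a - x) ≤ 1 - r := by
      have h5 : a + x ≥ 2 * c := by rw [hcdef]; linarith
      have h6 : (a + x) * (a - x) = a ^ 2 - x ^ 2 := by ring
      have h7 : a ^ 2 - x ^ 2 = 1 - r ^ 2 := by rw [hasq]; linarith [hsq]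
      have h8 : 0 ≤ a - x := by linarith
      have h9 : 2 * c * (a - x) ≤ (a + x) * (a - x) := mul_le_mul_of_nonneg_right h5 h8
      have h10 : 1 - r ^ 2 ≤ 2 * (1 - r) := by linarith [sq_nonneg (1 - r)]
      linarith
    have key2 : |y| ≤ ‖1 - z‖ := by
      have him : (1 - z).im = -y := by simp [hydef]
      have := Complex.abs_im_le_norm (1 - z)
      rw [him, abs_neg] at this
      exact this
    have hlogy_pos : 0 < Real.log (1 / |y|) := by
      apply Real.log_pos
      rw [lt_div_iff₀ hay]
      linarith
    have key3 : Real.log (1 / |y|) ≤ Real.log (1 / (1 - r)) := by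
      apply Real.log_le_log (by positivity)
      apply one_div_le_one_div_of_le h1r h1rley
    -- denominators
    set L : ℝ := Real.log (1 / (1 - r)) with hLdef
    have hL0 : 0 < L := lt_of_lt_of_le hlogy_pos key3
    set D : ℝ := (1 - r) ^ (2 - p) * ‖1 - z‖ ^ p * L ^ β with hDdef
    set D' : ℝ := (c * (a - x)) ^ (2 - p) * (|y| ^ p * (Real.log (1 / |y|)) ^ β) with hD'def
    have hca : 0 < c * (a - x) := mul_pos hc (by linarith)
    have hD'pos : 0 < D' := by
      apply mul_pos (Real.rpow_pos_of_pos hca _)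
      exact mul_pos (Real.rpow_pos_of_pos hay _) (Real.rpow_pos_of_pos hlogy_pos _)
    have hD'D : D' ≤ D := by
      rw [hDdef, hD'def, mul_assoc]
      apply mul_le_mul
      · exact Real.rpow_le_rpow hca.le key1 (by linarith)
      · apply mul_le_mul
        · exact Real.rpow_le_rpow (abs_nonneg _) key2 (by linarith)
        · exact Real.rpow_le_rpow hlogy_pos.le key3 hβ0
        · exact Real.rpow_nonneg hlogy_pos.le _
        · exact Real.rpow_nonneg (norm_nonneg _) _
      · apply mul_nonneg (Real.rpow_nonneg hay.le _) (Real.rpow_nonneg hlogy_pos.le _)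
      · exact Real.rpow_nonneg (by linarith) _
    have hfnn : 0 ≤ 1 / D := by
      apply div_nonneg (by norm_num)
      rw [hDdef]
      apply mul_nonneg (mul_nonneg (Real.rpow_nonneg h1r.le _)
        (Real.rpow_nonneg (norm_nonneg _) _)) (Real.rpow_nonneg hL0.le _)
    rw [Real.norm_eq_abs, abs_of_nonneg hfnn]
    have step1 : 1 / D ≤ 1 / D' := one_div_le_one_div_of_le hD'pos hD'D
    apply le_trans step1
    -- now show 1 / D' = Hb p β (x, y)
    have hHb : Hb p β (x, y) = c ^ (p - 2) * (a - x) ^ (p - 2) * |y| ^ (-p) *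
        (Real.log (1 / |y|)) ^ (-β) := rfl
    have hexp : 1 / D' = Hb p β (x, y) := by
      rw [hHb, hD'def]
      rw [Real.mul_rpow hc.le (by linarith : (0:ℝ) ≤ a - x)]
      rw [show (p - 2 : ℝ) = -(2 - p) by ring]
      rw [Real.rpow_neg hc.le, Real.rpow_neg (by linarith : (0:ℝ) ≤ a - x),
        Real.rpow_neg (abs_nonneg y), Real.rpow_neg hlogy_pos.le]
      field_simp
    rw [hexp]
end
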